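/- Let G be a DAG with two-layer partition X ≺ Y and P faithful to G. If X_{k0} → Y_{j1} ← Y_{j0} is an open collider in G (both edges present) and X_{k0} → Y_{j0} is not an edge of G, then X_{k0} and Y_{j0} are conditionally dependent given X_{-k0} ∪ Y_{-j0}; hence the graph H^(-j) contains the false positive edge X_{k0} → Y_{j0}. Moreover, every true edge X_k → Y_j of G is contained in H^(-j). -/

import Mathlib

/-- Directed reachability in a digraph (reflexive-transitive closure of the edge relation). -/
def Reaches {V : Type*} (G : V → V → Prop) : V → V → Prop := Relation.ReflTransGen G

/-- A digraph is acyclic if no vertex lies on a directed cycle. -/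
def Acyclic {V : Type*} (G : V → V → Prop) : Prop := ∀ v, ¬ Relation.TransGen G v v

/-- `p` is an (undirected) path from `a` to `b` in the digraph `G`. -/
def IsTrail {V : Type*} (G : V → V → Prop) (a b : V) (p : List V) : Prop :=
  p.Chain' (fun x y => G x y ∨ G y x) ∧ p.head? = some a ∧ p.getLast? = some b ∧ p.Nodup

/-- Consecutive triples of a list. -/
def triples {V : Type*} : List V → List (V × V × V)
  | x :: y :: z :: r => (x, y, z) :: triples (y :: z :: r)
  | _ => []

/-- A triple `(x, y, z)` on a path is blocked by `S` if `y` is a collider none of whose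
descendants lies in `S`, or `y` is a non-collider belonging to `S`. -/
def BlockedTriple {V : Type*} [DecidableEq V] (G : V → V → Prop) (S : Finset V)
    (t : V × V × V) : Prop :=
  (G t.1 t.2.1 ∧ G t.2.2 t.2.1 ∧ ∀ d, Reaches G t.2.1 d → d ∉ S)
  ∨ (¬ (G t.1 t.2.1 ∧ G t.2.2 t.2.1) ∧ t.2.1 ∈ S)

/-- A path is blocked by `S` if some internal triple is blocked. -/
def Blocked {V : Type*} [DecidableEq V] (G : V → V → Prop) (S : Finset V) (p : List V) : Prop :=
  ∃ t ∈ triples p, BlockedTriple G S t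

/-- `S` d-separates `a` and `b` in `G` if every path between them is blocked. -/
def DSep {V : Type*} [DecidableEq V] (G : V → V → Prop) (S : Finset V) (a b : V) : Prop :=
  ∀ p : List V, IsTrail G a b p → Blocked G S p

/-- in a two-layer DAG `Xs ≺ Ys` with a faithful distribution, an open
collider `X_{k₀} → Y_{j₁} ← Y_{j₀}` with `X_{k₀} → Y_{j₀}` absent yields dependence of
`X_{k₀}` and `Y_{j₀}` given `X_{-k₀} ∪ Y_{-j₀}` (a false positive of `H^(-j)`); moreover,
every true edge `X_k → Y_j` of `G` is contained in `H^(-j)`. -/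
theorem Hminusj_false_positive_and_true_edges
    {V : Type*} [Fintype V] [DecidableEq V]
    (G : V → V → Prop) (Indep : V → V → Finset V → Prop)
    (Xs Ys : Finset V)
    (hpart : ∀ v, v ∈ Xs ∨ v ∈ Ys) (hdisj : Disjoint Xs Ys)
    (horder : ∀ a ∈ Ys, ∀ b ∈ Xs, ¬ G a b)
    (hacy : Acyclic G)
    (hMarkov : ∀ a b S, DSep G S a b → Indep a b S)
    (hFaithful : ∀ a b S, Indep a b S → DSep G S a b)
    (k0 j0 j1 : V) (hk0 : k0 ∈ Xs) (hj0 : j0 ∈ Ys) (hj1 : j1 ∈ Ys)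
    (hcol1 : G k0 j1) (hcol2 : G j0 j1) (hnoedge : ¬ G k0 j0) :
    (¬ Indep k0 j0 ((Xs \ {k0}) ∪ (Ys \ {j0}))) ∧
    (∀ k ∈ Xs, ∀ j ∈ Ys, G k j → ¬ Indep k j ((Xs \ {k}) ∪ (Ys \ {j}))) := by
  have hdis := Finset.disjoint_left.mp hdisj
  constructor
  · intro hInd
    have hd := hFaithful _ _ _ hInd
    have hne01 : j1 ≠ j0 := by
      intro h; rw [h] at hcol2; exact hacy j0 (Relation.TransGen.single hcol2)
    have hk0j1 : k0 ≠ j1 := by rintro rfl; exact hdis hk0 hj1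
    have hk0j0 : k0 ≠ j0 := by rintro rfl; exact hdis hk0 hj0
    have htrail : IsTrail G k0 j0 [k0, j1, j0] := by
      refine ⟨?_, rfl, rfl, ?_⟩
      · simp [List.Chain', List.isChain_cons_cons, hcol1, hcol2]
      · simp [hk0j1, hk0j0, hne01]
    obtain ⟨t, ht, hbt⟩ := hd _ htrail
    have : t = (k0, j1, j0) := by simpa [triples] using ht
    subst this
    rcases hbt with ⟨_, _, hnd⟩ | ⟨hnc, _⟩
    · exact hnd j1 Relation.ReflTransGen.refl
        (Finset.mem_union_right _ (Finset.mem_sdiff.mpr ⟨hj1, by simp [hne01]⟩))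
    · exact hnc ⟨hcol1, hcol2⟩
  · intro k hk j hj hGkj hInd
    have hd := hFaithful _ _ _ hInd
    have hne : k ≠ j := by rintro rfl; exact hdis hk hj
    have htrail : IsTrail G k j [k, j] := by
      refine ⟨?_, rfl, rfl, ?_⟩
      · simp [List.Chain', hGkj]
      · simp [hne]
    obtain ⟨t, ht, _⟩ := hd _ htrail
    simp [triples] at ht
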